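/- Let x̄ ∈ F be a locally optimal solution of (MPSC). Assume that x̄ is an S-stationary point of (MPSC) and that MPSC-WCR holds at x̄. Then MPSC-WSONC holds at x̄: for every multiplier vector (λ, ρ, μ, ν) satisfying the S-stationarity system at x̄ and every d̃ ∈ C̃^MPSC_F(x̄), one has d̃ᵀ∇²ℓ(x̄)d̃ ≥ 0, where ℓ := f + Σ_i λ_i g_i + Σ_j ρ_j h_j + Σ_k μ_k G_k + Σ_k ν_k H_k. -/

import Mathlib

open Set Filter Topology Metric

noncomputable section

namespace MPSC

abbrev Vec (n : ℕ) := EuclideanSpace ℝ (Fin n)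

variable {n m p l : ℕ}

open scoped Classical in
/-- Sum of a function over an index set (finite ambient type). -/
noncomputable def sumOver {α β : Type*} [Fintype α] [AddCommMonoid β]
    (S : Set α) (v : α → β) : β :=
  ∑ a, if a ∈ S then v a else 0

/-- The feasible set of (MPSC). -/
def Feas (g : Fin m → Vec n → ℝ) (h : Fin p → Vec n → ℝ)
    (G H : Fin l → Vec n → ℝ) : Set (Vec n) :=
  {x | (∀ i, g i x ≤ 0) ∧ (∀ j, h j x = 0) ∧ ∀ k, G k x * H k x = 0}

/-- Index set of active inequality constraints. -/
def Ig (g : Fin m → Vec n → ℝ) (xb : Vec n) : Set (Fin m) := {i | g i xb = 0}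

def IG (G H : Fin l → Vec n → ℝ) (xb : Vec n) : Set (Fin l) :=
  {k | G k xb = 0 ∧ H k xb ≠ 0}

def IH (G H : Fin l → Vec n → ℝ) (xb : Vec n) : Set (Fin l) :=
  {k | G k xb ≠ 0 ∧ H k xb = 0}

def IGH (G H : Fin l → Vec n → ℝ) (xb : Vec n) : Set (Fin l) :=
  {k | G k xb = 0 ∧ H k xb = 0}

/-- (β1, β2) is a disjoint bipartition of I_GH. -/
def Partition (G H : Fin l → Vec n → ℝ) (xb : Vec n) (β1 β2 : Set (Fin l)) : Prop :=
  β1 ∩ β2 = ∅ ∧ β1 ∪ β2 = IGH G H xb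

/-- Branch feasible set. -/
def BranchFeas (g : Fin m → Vec n → ℝ) (h : Fin p → Vec n → ℝ)
    (G H : Fin l → Vec n → ℝ) (xb : Vec n) (β1 β2 : Set (Fin l)) : Set (Vec n) :=
  {x | (∀ i, g i x ≤ 0) ∧ (∀ j, h j x = 0) ∧
    (∀ k ∈ IG G H xb ∪ β1, G k x = 0) ∧ ∀ k ∈ IH G H xb ∪ β2, H k x = 0}

/-- Bouligand tangent cone, as defined in the paper. -/
def tangentCone (Ω : Set (Vec n)) (xb : Vec n) : Set (Vec n) :=
  {d | ∃ t : ℕ → ℝ, ∃ x : ℕ → Vec n, (∀ k, 0 ≤ t k) ∧ (∀ k, x k ∈ Ω) ∧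
    Tendsto x atTop (nhds xb) ∧ Tendsto (fun k => t k • (x k - xb)) atTop (nhds d)}

/-- MPSC linearization cone. -/
def LCone (g : Fin m → Vec n → ℝ) (h : Fin p → Vec n → ℝ)
    (G H : Fin l → Vec n → ℝ) (xb : Vec n) : Set (Vec n) :=
  {d | (∀ i ∈ Ig g xb, fderiv ℝ (g i) xb d ≤ 0) ∧ (∀ j, fderiv ℝ (h j) xb d = 0) ∧
    (∀ k ∈ IG G H xb, fderiv ℝ (G k) xb d = 0) ∧ (∀ k ∈ IH G H xb, fderiv ℝ (H k) xb d = 0) ∧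
    ∀ k ∈ IGH G H xb, fderiv ℝ (G k) xb d * fderiv ℝ (H k) xb d = 0}

/-- Branch linearization cone. -/
def BranchLCone (g : Fin m → Vec n → ℝ) (h : Fin p → Vec n → ℝ)
    (G H : Fin l → Vec n → ℝ) (xb : Vec n) (β1 β2 : Set (Fin l)) : Set (Vec n) :=
  {d | (∀ i ∈ Ig g xb, fderiv ℝ (g i) xb d ≤ 0) ∧ (∀ j, fderiv ℝ (h j) xb d = 0) ∧
    (∀ k ∈ IG G H xb ∪ β1, fderiv ℝ (G k) xb d = 0) ∧
    ∀ k ∈ IH G H xb ∪ β2, fderiv ℝ (H k) xb d = 0}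

/-- MPSC critical subspace. -/
def CritSubspace (g : Fin m → Vec n → ℝ) (h : Fin p → Vec n → ℝ)
    (G H : Fin l → Vec n → ℝ) (xb : Vec n) : Set (Vec n) :=
  {d | (∀ i ∈ Ig g xb, fderiv ℝ (g i) xb d = 0) ∧ (∀ j, fderiv ℝ (h j) xb d = 0) ∧
    (∀ k ∈ IG G H xb ∪ IGH G H xb, fderiv ℝ (G k) xb d = 0) ∧
    ∀ k ∈ IH G H xb ∪ IGH G H xb, fderiv ℝ (H k) xb d = 0}

/-- Rank (dimension of the span) of the family of gradients
{∇g_i(x)}_{i∈I1} ∪ {∇h_j(x)}_j ∪ {∇G_k(x)}_{k∈I3} ∪ {∇H_k(x)}_{k∈I4}. -/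
def gradRank (g : Fin m → Vec n → ℝ) (h : Fin p → Vec n → ℝ)
    (G H : Fin l → Vec n → ℝ) (I1 : Set (Fin m)) (I3 I4 : Set (Fin l)) (x : Vec n) : ℕ :=
  Module.finrank ℝ ↥(Submodule.span ℝ
    ((fun i => gradient (g i) x) '' I1 ∪ Set.range (fun j => gradient (h j) x) ∪
     (fun k => gradient (G k) x) '' I3 ∪ (fun k => gradient (H k) x) '' I4))

/-- MPSC-LICQ. -/
def LICQ (g : Fin m → Vec n → ℝ) (h : Fin p → Vec n → ℝ)
    (G H : Fin l → Vec n → ℝ) (xb : Vec n) : Prop :=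
  ∀ (lam : Fin m → ℝ) (ρ : Fin p → ℝ) (μ ν : Fin l → ℝ),
    (∀ i, i ∉ Ig g xb → lam i = 0) →
    (∀ k, k ∉ IG G H xb ∪ IGH G H xb → μ k = 0) →
    (∀ k, k ∉ IH G H xb ∪ IGH G H xb → ν k = 0) →
    ∑ i, lam i • gradient (g i) xb + ∑ j, ρ j • gradient (h j) xb +
      ∑ k, μ k • gradient (G k) xb + ∑ k, ν k • gradient (H k) xb = 0 →
    lam = 0 ∧ ρ = 0 ∧ μ = 0 ∧ ν = 0

/-- MPSC-RCRCQ. -/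
def RCRCQ (g : Fin m → Vec n → ℝ) (h : Fin p → Vec n → ℝ)
    (G H : Fin l → Vec n → ℝ) (xb : Vec n) : Prop :=
  ∃ ε > (0:ℝ), ∀ I1 : Set (Fin m), I1 ⊆ Ig g xb →
    ∀ I3 I4 : Set (Fin l), I3 ⊆ IGH G H xb → I4 ⊆ IGH G H xb →
      ∀ x : Vec n, ‖x - xb‖ < ε →
        gradRank g h G H I1 (I3 ∪ IG G H xb) (I4 ∪ IH G H xb) x =
        gradRank g h G H I1 (I3 ∪ IG G H xb) (I4 ∪ IH G H xb) xb

/-- MPSC-WCR. -/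
def WCR (g : Fin m → Vec n → ℝ) (h : Fin p → Vec n → ℝ)
    (G H : Fin l → Vec n → ℝ) (xb : Vec n) : Prop :=
  ∃ ε > (0:ℝ), ∀ x : Vec n, ‖x - xb‖ < ε →
    gradRank g h G H (Ig g xb) (IG G H xb ∪ IGH G H xb) (IH G H xb ∪ IGH G H xb) x =
    gradRank g h G H (Ig g xb) (IG G H xb ∪ IGH G H xb) (IH G H xb ∪ IGH G H xb) xb

/-- MPSC-PWCR. -/
def PWCR (g : Fin m → Vec n → ℝ) (h : Fin p → Vec n → ℝ)
    (G H : Fin l → Vec n → ℝ) (xb : Vec n) : Prop :=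
  ∀ β1 β2 : Set (Fin l), Partition G H xb β1 β2 →
    ∃ ε > (0:ℝ), ∀ x : Vec n, ‖x - xb‖ < ε →
      gradRank g h G H (Ig g xb) (IG G H xb ∪ β1) (IH G H xb ∪ β2) x =
      gradRank g h G H (Ig g xb) (IG G H xb ∪ β1) (IH G H xb ∪ β2) xb

/-- The index set I_g^- associated with a branch (β1, β2). -/
def IgMinus (g : Fin m → Vec n → ℝ) (h : Fin p → Vec n → ℝ)
    (G H : Fin l → Vec n → ℝ) (xb : Vec n) (β1 β2 : Set (Fin l)) : Set (Fin m) :=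
  {i | i ∈ Ig g xb ∧ ∃ (lam : Fin m → ℝ) (ρ : Fin p → ℝ) (μ ν : Fin l → ℝ),
    (∀ i', 0 ≤ lam i') ∧ (∀ i', i' ∉ Ig g xb \ {i} → lam i' = 0) ∧
    (∀ k, k ∉ IG G H xb ∪ β1 → μ k = 0) ∧ (∀ k, k ∉ IH G H xb ∪ β2 → ν k = 0) ∧
    -gradient (g i) xb = ∑ i', lam i' • gradient (g i') xb + ∑ j, ρ j • gradient (h j) xb +
      ∑ k, μ k • gradient (G k) xb + ∑ k, ν k • gradient (H k) xb}

/-- MPSC-PCRSC. -/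
def PCRSC (g : Fin m → Vec n → ℝ) (h : Fin p → Vec n → ℝ)
    (G H : Fin l → Vec n → ℝ) (xb : Vec n) : Prop :=
  ∀ β1 β2 : Set (Fin l), Partition G H xb β1 β2 →
    ∃ ε > (0:ℝ), ∀ x : Vec n, ‖x - xb‖ < ε →
      gradRank g h G H (IgMinus g h G H xb β1 β2) (IG G H xb ∪ β1) (IH G H xb ∪ β2) x =
      gradRank g h G H (IgMinus g h G H xb β1 β2) (IG G H xb ∪ β1) (IH G H xb ∪ β2) xb

/-- A twice differentiable arc on [0, δ) (one-sided at the endpoint 0),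
with first derivative ξ'. -/
def TwiceDiffArc (δ : ℝ) (ξ ξ' : ℝ → Vec n) : Prop :=
  (∀ t ∈ Ico (0:ℝ) δ, HasDerivWithinAt ξ (ξ' t) (Ico (0:ℝ) δ) t) ∧
  ∀ t ∈ Ico (0:ℝ) δ, DifferentiableWithinAt ℝ ξ' (Ico (0:ℝ) δ) t

/-- MPSC-SSOCQ. -/
def SSOCQ (g : Fin m → Vec n → ℝ) (h : Fin p → Vec n → ℝ)
    (G H : Fin l → Vec n → ℝ) (xb : Vec n) : Prop :=
  ∀ d ∈ LCone g h G H xb, d ≠ 0 →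
    ∃ δ > (0:ℝ), ∃ J K : Set (Fin l), J ⊆ IGH G H xb ∧ K ⊆ IGH G H xb ∧
      ∃ ξ ξ' : ℝ → Vec n, TwiceDiffArc δ ξ ξ' ∧
        (∀ t ∈ Ico (0:ℝ) δ, ξ t ∈ Feas g h G H) ∧
        ξ 0 = xb ∧ ξ' 0 = d ∧
        (∀ t ∈ Ico (0:ℝ) δ, ∀ i ∈ Ig g xb, fderiv ℝ (g i) xb d = 0 → g i (ξ t) = 0) ∧
        (∀ t ∈ Ico (0:ℝ) δ, ∀ k ∈ IG G H xb ∪ J, G k (ξ t) = 0) ∧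
        ∀ t ∈ Ico (0:ℝ) δ, ∀ k ∈ IH G H xb ∪ K, H k (ξ t) = 0

/-- MPSC-WSOCQ. -/
def WSOCQ (g : Fin m → Vec n → ℝ) (h : Fin p → Vec n → ℝ)
    (G H : Fin l → Vec n → ℝ) (xb : Vec n) : Prop :=
  ∀ d ∈ CritSubspace g h G H xb, d ≠ 0 →
    ∃ δ > (0:ℝ), ∃ J K : Set (Fin l), J ⊆ IGH G H xb ∧ K ⊆ IGH G H xb ∧
      ∃ ζ ζ' : ℝ → Vec n, TwiceDiffArc δ ζ ζ' ∧
        (∀ t ∈ Ico (0:ℝ) δ, ζ t ∈ Feas g h G H) ∧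
        ζ 0 = xb ∧ ζ' 0 = d ∧
        (∀ t ∈ Ico (0:ℝ) δ, ∀ i ∈ Ig g xb, g i (ζ t) = 0) ∧
        (∀ t ∈ Ico (0:ℝ) δ, ∀ k ∈ IG G H xb ∪ J, G k (ζ t) = 0) ∧
        ∀ t ∈ Ico (0:ℝ) δ, ∀ k ∈ IH G H xb ∪ K, H k (ζ t) = 0

/-- The S-stationarity system for multipliers (λ, ρ, μ, ν) at xb. -/
def SStationarySystem (f : Vec n → ℝ) (g : Fin m → Vec n → ℝ) (h : Fin p → Vec n → ℝ)
    (G H : Fin l → Vec n → ℝ) (xb : Vec n)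
    (lam : Fin m → ℝ) (ρ : Fin p → ℝ) (μ ν : Fin l → ℝ) : Prop :=
  (∀ i, 0 ≤ lam i) ∧ (∀ i, lam i * g i xb = 0) ∧
  (∀ k ∈ IH G H xb ∪ IGH G H xb, μ k = 0) ∧
  (∀ k ∈ IG G H xb ∪ IGH G H xb, ν k = 0) ∧
  gradient f xb + ∑ i, lam i • gradient (g i) xb + ∑ j, ρ j • gradient (h j) xb +
    ∑ k, μ k • gradient (G k) xb + ∑ k, ν k • gradient (H k) xb = 0

def SStationary (f : Vec n → ℝ) (g : Fin m → Vec n → ℝ) (h : Fin p → Vec n → ℝ)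
    (G H : Fin l → Vec n → ℝ) (xb : Vec n) : Prop :=
  ∃ (lam : Fin m → ℝ) (ρ : Fin p → ℝ) (μ ν : Fin l → ℝ),
    SStationarySystem f g h G H xb lam ρ μ ν

/-- The M-stationarity system for multipliers (λ, ρ, μ, ν) at xb. -/
def MStationarySystem (f : Vec n → ℝ) (g : Fin m → Vec n → ℝ) (h : Fin p → Vec n → ℝ)
    (G H : Fin l → Vec n → ℝ) (xb : Vec n)
    (lam : Fin m → ℝ) (ρ : Fin p → ℝ) (μ ν : Fin l → ℝ) : Prop :=
  (∀ i, 0 ≤ lam i) ∧ (∀ i, lam i * g i xb = 0) ∧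
  (∀ k ∈ IH G H xb, μ k = 0) ∧ (∀ k ∈ IG G H xb, ν k = 0) ∧
  (∀ k ∈ IGH G H xb, μ k * ν k = 0) ∧
  gradient f xb + ∑ i, lam i • gradient (g i) xb + ∑ j, ρ j • gradient (h j) xb +
    ∑ k, μ k • gradient (G k) xb + ∑ k, ν k • gradient (H k) xb = 0

def MStationary (f : Vec n → ℝ) (g : Fin m → Vec n → ℝ) (h : Fin p → Vec n → ℝ)
    (G H : Fin l → Vec n → ℝ) (xb : Vec n) : Prop :=
  ∃ (lam : Fin m → ℝ) (ρ : Fin p → ℝ) (μ ν : Fin l → ℝ),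
    MStationarySystem f g h G H xb lam ρ μ ν

/-- Local optimality for (MPSC). -/
def LocallyOptimal (f : Vec n → ℝ) (g : Fin m → Vec n → ℝ) (h : Fin p → Vec n → ℝ)
    (G H : Fin l → Vec n → ℝ) (xb : Vec n) : Prop :=
  xb ∈ Feas g h G H ∧ ∃ ε > (0:ℝ), ∀ x ∈ Feas g h G H, ‖x - xb‖ < ε → f xb ≤ f x

/-- Hessian quadratic form dᵀ∇²φ(x)d. -/
def hessForm (φ : Vec n → ℝ) (x d : Vec n) : ℝ :=
  iteratedFDeriv ℝ 2 φ x ![d, d]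

/-- The Lagrange function ℓ. -/
def lagr (f : Vec n → ℝ) (g : Fin m → Vec n → ℝ) (h : Fin p → Vec n → ℝ)
    (G H : Fin l → Vec n → ℝ)
    (lam : Fin m → ℝ) (ρ : Fin p → ℝ) (μ ν : Fin l → ℝ) : Vec n → ℝ :=
  fun x => f x + ∑ i, lam i * g i x + ∑ j, ρ j * h j x +
    ∑ k, μ k * G k x + ∑ k, ν k * H k x

/-- Constraint-violation residual. -/
def residual (g : Fin m → Vec n → ℝ) (h : Fin p → Vec n → ℝ)
    (G H : Fin l → Vec n → ℝ) (x : Vec n) : ℝ :=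
  Real.sqrt (∑ i, max (g i x) 0 ^ 2 + ∑ j, h j x ^ 2 + ∑ k, min (G k x ^ 2) (H k x ^ 2))

/-- Penalty function P_κ. -/
def Pen (f : Vec n → ℝ) (g : Fin m → Vec n → ℝ) (h : Fin p → Vec n → ℝ)
    (G H : Fin l → Vec n → ℝ) (κ : ℝ) (x : Vec n) : ℝ :=
  f x + κ * residual g h G H x

/-- MPSC piecewise second-order quasi-normality. -/
def PSOQN (g : Fin m → Vec n → ℝ) (h : Fin p → Vec n → ℝ)
    (G H : Fin l → Vec n → ℝ) (xb : Vec n) : Prop :=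
  ∀ β1 β2 : Set (Fin l), Partition G H xb β1 β2 →
    ¬ ∃ (lam : Fin m → ℝ) (ρ : Fin p → ℝ) (μ ν : Fin l → ℝ),
      (∀ i, 0 ≤ lam i) ∧
      (∀ k, k ∉ IG G H xb ∪ β1 → μ k = 0) ∧ (∀ k, k ∉ IH G H xb ∪ β2 → ν k = 0) ∧
      ¬(lam = 0 ∧ ρ = 0 ∧ μ = 0 ∧ ν = 0) ∧
      (∑ i, lam i • gradient (g i) xb + ∑ j, ρ j • gradient (h j) xb +
        ∑ k, μ k • gradient (G k) xb + ∑ k, ν k • gradient (H k) xb = 0) ∧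
      (∀ d : Vec n, (∀ i ∈ Ig g xb, fderiv ℝ (g i) xb d = 0) →
        (∀ j, fderiv ℝ (h j) xb d = 0) →
        (∀ k ∈ IG G H xb ∪ β1, fderiv ℝ (G k) xb d = 0) →
        (∀ k ∈ IH G H xb ∪ β2, fderiv ℝ (H k) xb d = 0) →
        0 ≤ ∑ i, lam i * hessForm (g i) xb d + ∑ j, ρ j * hessForm (h j) xb d +
          ∑ k, μ k * hessForm (G k) xb d + ∑ k, ν k * hessForm (H k) xb d) ∧
      ∃ xs : ℕ → Vec n, Tendsto xs atTop (nhds xb) ∧ ∀ s,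
        (∀ i, 0 < lam i → 0 < lam i * g i (xs s)) ∧
        (∀ j, ρ j ≠ 0 → 0 < ρ j * h j (xs s)) ∧
        (∀ k, μ k ≠ 0 → 0 < μ k * G k (xs s)) ∧
        (∀ k, ν k ≠ 0 → 0 < ν k * H k (xs s))

section AuxLemmas

open scoped RealInnerProductSpace

set_option linter.unusedSectionVars false

variable {E : Type*} [NormedAddCommGroup E] [InnerProductSpace ℝ E] [FiniteDimensional ℝ E]

lemma aux_inner_gradient (φ : E → ℝ) (x v : E) :
    ⟪gradient φ x, v⟫ = fderiv ℝ φ x v := by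
  rw [gradient, InnerProductSpace.toDual_symm_apply]

lemma aux_nhds_Ioo {P : ℝ → Prop} (h : ∀ᶠ t in 𝓝 (0:ℝ), P t) :
    ∃ δ > (0:ℝ), ∀ t ∈ Ioo (-δ) δ, P t := by
  rcases Metric.eventually_nhds_iff.1 h with ⟨ε, ε0, hε⟩
  refine ⟨ε, ε0, fun t ht => hε ?_⟩
  rw [Real.dist_eq, sub_zero]
  exact abs_lt.2 ⟨ht.1, ht.2⟩

lemma aux_const_of_deriv_zero {F : ℝ → ℝ} {δ : ℝ} (h : ∀ t ∈ Ioo (-δ) δ, HasDerivAt F 0 t) :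
    ∀ t ∈ Ioo (-δ) δ, F t = F 0 := by
  have key : ∀ a b : ℝ, a ∈ Ioo (-δ) δ → b ∈ Ioo (-δ) δ → a ≤ b → F b = F a := by
    intro a b ha hb hab
    have hsub : Icc a b ⊆ Ioo (-δ) δ := fun x hx =>
      ⟨lt_of_lt_of_le ha.1 hx.1, lt_of_le_of_lt hx.2 hb.2⟩
    have := constant_of_has_deriv_right_zero (f := F) (a := a) (b := b)
      (fun x hx => (h x (hsub hx)).continuousAt.continuousWithinAt)
      (fun x hx => (h x (hsub ⟨hx.1, hx.2.le⟩)).hasDerivWithinAt)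
    exact this b (right_mem_Icc.2 hab)
  intro t ht
  have hδ : (0:ℝ) < δ := by
    have := ht.1.trans ht.2; linarith
  have h0 : (0:ℝ) ∈ Ioo (-δ) δ := ⟨by linarith, hδ⟩
  rcases le_total t 0 with h'|h'
  · exact (key t 0 ht h0 h').symm
  · exact key 0 t h0 ht h'

lemma aux_inner_zero_of_mem_span {v : E} {S : Set E} (h : ∀ u ∈ S, ⟪u, v⟫ = 0)
    {w : E} (hw : w ∈ Submodule.span ℝ S) : ⟪w, v⟫ = 0 := by
  induction hw using Submodule.span_induction with
  | mem x hx => exact h x hx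
  | zero => simp
  | add x y _ _ hx hy => rw [inner_add_left, hx, hy, add_zero]
  | smul a x _ hx => rw [real_inner_smul_left, hx, mul_zero]

lemma aux_second_order {ψ Dψ : ℝ → ℝ} {c δ : ℝ} (hδ : 0 < δ)
    (hmin : ∀ t ∈ Ioo (-δ) δ, ψ 0 ≤ ψ t)
    (hder : ∀ t ∈ Ioo (-δ) δ, HasDerivAt ψ (Dψ t) t)
    (h0 : Dψ 0 = 0) (hd2 : HasDerivAt Dψ c 0) : 0 ≤ c := by
  by_contra hc
  push_neg at hc
  have hslope : Tendsto (slope Dψ 0) (𝓝[≠] 0) (𝓝 c) := hasDerivAt_iff_tendsto_slope.1 hd2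
  have hev : ∀ᶠ t in 𝓝[≠] (0:ℝ), slope Dψ 0 t < 0 :=
    hslope.eventually_lt_const hc
  rw [eventually_nhdsWithin_iff] at hev
  rcases Metric.eventually_nhds_iff.1 hev with ⟨η, hη, hηs⟩
  set t0 := min (η/2) (δ/2) with ht0def
  have ht0 : 0 < t0 := lt_min (by linarith) (by linarith)
  have ht0δ : t0 < δ := lt_of_le_of_lt (min_le_right _ _) (by linarith)
  have ht0I : ∀ x ∈ Icc (0:ℝ) t0, x ∈ Ioo (-δ) δ := fun x hx =>
    ⟨by linarith [hx.1], lt_of_le_of_lt hx.2 ht0δ⟩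
  have hcont : ContinuousOn ψ (Icc 0 t0) := fun x hx =>
    (hder x (ht0I x hx)).continuousAt.continuousWithinAt
  obtain ⟨ξ, hξ, hξeq⟩ := exists_hasDerivAt_eq_slope ψ Dψ ht0 hcont
    (fun x hx => hder x (ht0I x ⟨hx.1.le, hx.2.le⟩))
  have hξneg : Dψ ξ < 0 := by
    have hmem : ξ ∈ {x : ℝ | x ≠ 0} := ne_of_gt hξ.1
    have hdist : dist ξ 0 < η := by
      rw [Real.dist_eq, sub_zero, abs_of_pos hξ.1]
      have := hξ.2
      have : ξ < η/2 := lt_of_lt_of_le this (min_le_left _ _)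
      linarith
    have := hηs hdist hmem
    rw [slope_def_field, h0, sub_zero, sub_zero] at this
    rcases div_neg_iff.1 this with ⟨_, hb⟩ | ⟨ha, _⟩
    · exact absurd hξ.1 (not_lt.2 hb.le)
    · exact ha
  have hslope0 : 0 ≤ (ψ t0 - ψ 0) / (t0 - 0) := by
    apply div_nonneg _ (by linarith)
    have := hmin t0 ⟨by linarith, ht0δ⟩
    linarith
  rw [hξeq] at hξneg
  linarith

theorem aux_exists_arc [CompleteSpace E] {ι : Type*} [Fintype ι] (φ : ι → E → ℝ)
    (hφ : ∀ i, ContDiff ℝ 2 (φ i)) (xb : E)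
    (hrank : ∀ᶠ x in 𝓝 xb,
      Module.finrank ℝ ↥(Submodule.span ℝ (range fun i => gradient (φ i) x)) =
      Module.finrank ℝ ↥(Submodule.span ℝ (range fun i => gradient (φ i) xb)))
    (d : E) (hd : ∀ i, fderiv ℝ (φ i) xb d = 0) :
    ∃ δ > (0:ℝ), ∃ ζ : ℝ → E,
      ζ 0 = xb ∧ ContDiffOn ℝ 2 ζ (Ioo (-δ) δ) ∧ HasDerivAt ζ d 0 ∧ deriv ζ 0 = d ∧
      ∀ t ∈ Ioo (-δ) δ, ∀ i, φ i (ζ t) = φ i xb := by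
  classical
  have h12 : (2:WithTop ℕ∞) ≠ 0 := by norm_num
  have hgradc : ∀ i, Continuous fun x => gradient (φ i) x := fun i =>
    (InnerProductSpace.toDual ℝ E).symm.continuous.comp ((hφ i).continuous_fderiv h12)
  set w : ι → E := fun i => gradient (φ i) xb with hw
  obtain ⟨b, hbsub, hbspan, hbind⟩ := exists_linearIndependent ℝ (Set.range w)
  haveI : Fintype b := ((Set.finite_range w).subset hbsub).fintype
  choose c hc using fun v : b => Set.mem_range.1 (hbsub v.2)
  -- the affine map θ
  set L : (ℝ × (b → ℝ)) →L[ℝ] E :=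
    (ContinuousLinearMap.fst ℝ ℝ (b → ℝ)).smulRight d +
      ∑ j : b, ((ContinuousLinearMap.proj j).comp
        (ContinuousLinearMap.snd ℝ ℝ (b → ℝ))).smulRight (j : E) with hL
  have hLapp : ∀ (s : ℝ) (v : b → ℝ), L (s, v) = s • d + ∑ j : b, v j • (j : E) := by
    intro s v
    simp [hL, ContinuousLinearMap.sum_apply]
  set θ : ℝ × (b → ℝ) → E := fun q => xb + L q with hθ
  have hθ0 : θ (0, 0) = xb := by
    have : ((0:ℝ), (0 : b → ℝ)) = (0 : ℝ × (b → ℝ)) := rfl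
    simp [hθ, this]
  have hθcd : ContDiff ℝ 2 θ := contDiff_const.add L.contDiff
  set F : ℝ × (b → ℝ) → (b → ℝ) := fun q j => φ (c j) (θ q) with hF
  set Ψ : ℝ × (b → ℝ) → ℝ × (b → ℝ) := fun q => (q.1, F q) with hΨ
  have hΨcd : ContDiff ℝ 2 Ψ :=
    contDiff_fst.prodMk (contDiff_pi.2 fun j => (hφ (c j)).comp hθcd)
  set A : (ℝ × (b → ℝ)) →L[ℝ] ℝ × (b → ℝ) :=
    (ContinuousLinearMap.fst ℝ ℝ (b → ℝ)).prod
      (ContinuousLinearMap.pi fun j => (fderiv ℝ (φ (c j)) xb).comp L) with hA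
  have hθd : HasFDerivAt θ L (0, 0) := by
    simpa [hθ] using (L.hasFDerivAt (x := ((0 : ℝ), (0 : b → ℝ)))).const_add xb
  have hAd : HasFDerivAt Ψ A (0, 0) := by
    refine HasFDerivAt.prodMk hasFDerivAt_fst ?_
    apply hasFDerivAt_pi''
    intro j
    rw [ContinuousLinearMap.proj_pi]
    have h1 : HasFDerivAt (φ (c j)) (fderiv ℝ (φ (c j)) xb) (θ (0, 0)) := by
      rw [hθ0]; exact ((hφ (c j)).differentiable h12 xb).hasFDerivAt
    exact h1.comp (0, 0) hθd
  have hker : ∀ s : ℝ, ∀ v : b → ℝ, A (s, v) = 0 → s = 0 ∧ v = 0 := by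
    intro s v hq
    have hs : s = 0 := by
      have := congrArg Prod.fst hq
      simpa [hA] using this
    have hj : ∀ j : b, fderiv ℝ (φ (c j)) xb (L (s, v)) = 0 := by
      intro j
      have := congrArg (fun z : ℝ × (b → ℝ) => z.2 j) hq
      simpa [hA] using this
    subst hs
    have hzv : L ((0:ℝ), v) = ∑ j : b, v j • (j : E) := by rw [hLapp]; simp
    have hzj : ∀ j : b, ⟪(j : E), L ((0:ℝ), v)⟫ = 0 := by
      intro j
      have h2 : ⟪w (c j), L ((0:ℝ), v)⟫ = 0 := by
        rw [hw, aux_inner_gradient]; exact hj j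
      rwa [hc j] at h2
    have hz0 : L ((0:ℝ), v) = 0 := by
      rw [← inner_self_eq_zero (𝕜 := ℝ) (x := L ((0:ℝ), v))]
      refine aux_inner_zero_of_mem_span (S := Set.range fun j : b => (j : E)) ?_ ?_
      · rintro u ⟨j, rfl⟩; exact hzj j
      · rw [hzv]
        exact Submodule.sum_mem _ fun j _ =>
          Submodule.smul_mem _ _ (Submodule.subset_span ⟨j, rfl⟩)
    have hv : ∀ j, v j = 0 := by
      have h3 : ∑ j : b, v j • (j : E) = 0 := by rw [← hzv]; exact hz0
      exact Fintype.linearIndependent_iff.1 hbind v h3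
    exact ⟨rfl, funext hv⟩
  have hAinj : Function.Injective A := by
    intro q q' hqq
    have h0 : A (q - q') = 0 := by rw [map_sub, hqq, sub_self]
    have h1 : A ((q - q').1, (q - q').2) = 0 := by rwa [Prod.mk.eta]
    have h2 := hker (q - q').1 (q - q').2 h1
    have h3 : q - q' = 0 := Prod.ext_iff.2 ⟨h2.1, h2.2⟩
    exact sub_eq_zero.1 h3
  have hAbij : Function.Bijective (A : (ℝ × (b → ℝ)) →ₗ[ℝ] ℝ × (b → ℝ)) :=
    ⟨hAinj, LinearMap.injective_iff_surjective.1 hAinj⟩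
  set eA : (ℝ × (b → ℝ)) ≃L[ℝ] ℝ × (b → ℝ) :=
    (LinearEquiv.ofBijective (A : (ℝ × (b → ℝ)) →ₗ[ℝ] ℝ × (b → ℝ)) hAbij).toContinuousLinearEquiv
    with heA
  have heAA : (eA : (ℝ × (b → ℝ)) →L[ℝ] ℝ × (b → ℝ)) = A := by
    apply ContinuousLinearMap.ext
    intro q
    rfl
  have hS : HasStrictFDerivAt Ψ (eA : (ℝ × (b → ℝ)) →L[ℝ] ℝ × (b → ℝ)) (0, 0) :=
    hΨcd.contDiffAt.hasStrictFDerivAt' (by rw [heAA]; exact hAd) h12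
  set inv : ℝ × (b → ℝ) → ℝ × (b → ℝ) := hS.localInverse Ψ eA (0, 0) with hinvdef
  have hinvcd : ContDiffAt ℝ 2 inv (Ψ (0, 0)) :=
    hΨcd.contDiffAt.to_localInverse (f' := eA) (by rw [heAA]; exact hAd) h12
  have hri : ∀ᶠ z in 𝓝 (Ψ (0, 0)), Ψ (inv z) = z := hS.eventually_right_inverse
  have hinv0 : inv (Ψ (0, 0)) = (0, 0) := hS.localInverse_apply_image
  set F00 : b → ℝ := F (0, 0) with hF00
  have hΨ00 : Ψ (0, 0) = ((0:ℝ), F00) := rfl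
  set q : ℝ → ℝ × (b → ℝ) := fun t => inv (t, F00) with hqdef
  set ζ : ℝ → E := fun t => θ (t, (q t).2) with hζdef
  have hq0 : q 0 = (0, 0) := by
    have : ((0:ℝ), F00) = Ψ (0, 0) := rfl
    simp only [hqdef]
    rw [this]
    exact hinv0
  have hζ0 : ζ 0 = xb := by
    simp only [hζdef, hq0]
    exact hθ0
  have hqcd : ContDiffAt ℝ 2 q 0 := by
    have htF : ContDiffAt ℝ 2 (fun t : ℝ => ((t, F00) : ℝ × (b → ℝ))) 0 :=
      contDiffAt_id.prodMk contDiffAt_const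
    exact ContDiffAt.comp 0 hinvcd htF
  have hζcd0 : ContDiffAt ℝ 2 ζ 0 := by
    have h2 : ContDiffAt ℝ 2 (fun t : ℝ => ((t, (q t).2) : ℝ × (b → ℝ))) 0 :=
      contDiffAt_id.prodMk (contDiff_snd.contDiffAt.comp 0 hqcd)
    exact hθcd.contDiffAt.comp 0 h2
  have htend : Tendsto (fun t : ℝ => ((t, F00) : ℝ × (b → ℝ))) (𝓝 0) (𝓝 (Ψ (0, 0))) := by
    rw [hΨ00]
    exact (continuous_id.prodMk continuous_const).tendsto 0
  have hqev : ∀ᶠ t in 𝓝 (0:ℝ), (q t).1 = t ∧ F (q t) = F00 := by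
    filter_upwards [htend.eventually hri] with t ht
    exact ⟨congrArg Prod.fst ht, congrArg Prod.snd ht⟩
  have hζconst : ∀ᶠ t in 𝓝 (0:ℝ), ∀ j : b, φ (c j) (ζ t) = φ (c j) xb := by
    filter_upwards [hqev] with t ht j
    have hqt : q t = (t, (q t).2) := Prod.ext_iff.2 ⟨ht.1, rfl⟩
    have h1 : F (t, (q t).2) = F00 := by rw [← hqt]; exact ht.2
    have h2 : φ (c j) (ζ t) = F00 j := congrFun h1 j
    rw [h2, hF00]
    exact congrArg (φ (c j)) hθ0
  -- constant-rank span membership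
  have hbi : LinearIndependent ℝ fun j : b => gradient (φ (c j)) xb := by
    have heq : (fun j : b => gradient (φ (c j)) xb) = fun j : b => (j : E) := by
      funext j; exact hc j
    rw [heq]; exact hbind
  have hopind : ∀ᶠ x in 𝓝 xb, LinearIndependent ℝ fun j : b => gradient (φ (c j)) x := by
    have hcont : Continuous fun x => (fun j : b => gradient (φ (c j)) x) :=
      continuous_pi fun j => hgradc (c j)
    exact (hcont.tendsto xb).eventually hbi.eventually
  have hmemev : ∀ᶠ x in 𝓝 xb, ∀ i,
      gradient (φ i) x ∈ Submodule.span ℝ (range fun j : b => gradient (φ (c j)) x) := by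
    filter_upwards [hopind, hrank] with x hind hrk i
    have hle : Submodule.span ℝ (range fun j : b => gradient (φ (c j)) x) ≤
        Submodule.span ℝ (range fun i => gradient (φ i) x) :=
      Submodule.span_mono (by rintro _ ⟨j, rfl⟩; exact ⟨c j, rfl⟩)
    have h1 : Module.finrank ℝ
        ↥(Submodule.span ℝ (range fun j : b => gradient (φ (c j)) x)) = Fintype.card b :=
      finrank_span_eq_card hind
    have h2 : Module.finrank ℝ
        ↥(Submodule.span ℝ (range fun i => gradient (φ i) x)) = Fintype.card b := by
      rw [hrk]
      have hr : (range fun i => gradient (φ i) xb) = range w := rfl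
      rw [hr, ← hbspan, finrank_span_set_eq_card hbind, Set.toFinset_card]
    have hS2 : Submodule.span ℝ (range fun i => gradient (φ i) x) =
        Submodule.span ℝ (range fun j : b => gradient (φ (c j)) x) :=
      (Submodule.eq_of_le_of_finrank_le hle (by rw [h1, h2])).symm
    rw [← hS2]
    exact Submodule.subset_span (mem_range_self i)
  have hζcont : Tendsto ζ (𝓝 0) (𝓝 xb) := by
    have := hζcd0.continuousAt
    rwa [ContinuousAt, hζ0] at this
  have hmemζ : ∀ᶠ t in 𝓝 (0:ℝ), ∀ i,
      gradient (φ i) (ζ t) ∈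
        Submodule.span ℝ (range fun j : b => gradient (φ (c j)) (ζ t)) :=
    hζcont.eventually hmemev
  obtain ⟨u, hu, hucd⟩ := hζcd0.contDiffOn (le_refl 2) (by intro h; exact absurd h (by norm_num))
  have hu' : ∀ᶠ t in 𝓝 (0:ℝ), t ∈ u := hu
  obtain ⟨δ, hδ, hIoo⟩ := aux_nhds_Ioo (hζconst.and (hmemζ.and hu'))
  have hζI : ContDiffOn ℝ 2 ζ (Ioo (-δ) δ) := hucd.mono fun t ht => (hIoo t ht).2.2
  have hopen : IsOpen (Ioo (-δ:ℝ) δ) := isOpen_Ioo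
  have hdiff : ∀ t ∈ Ioo (-δ:ℝ) δ, HasDerivAt ζ (deriv ζ t) t := by
    intro t ht
    exact ((hζI.differentiableOn h12 t ht).differentiableAt (hopen.mem_nhds ht)).hasDerivAt
  have hzero_j : ∀ t ∈ Ioo (-δ:ℝ) δ, ∀ j : b,
      fderiv ℝ (φ (c j)) (ζ t) (deriv ζ t) = 0 := by
    intro t ht j
    have h1 : HasDerivAt (fun s => φ (c j) (ζ s)) (fderiv ℝ (φ (c j)) (ζ t) (deriv ζ t)) t :=
      ((hφ (c j)).differentiable h12 (ζ t)).hasFDerivAt.comp_hasDerivAt t (hdiff t ht)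
    have hconst : (fun s => φ (c j) (ζ s)) =ᶠ[𝓝 t] fun _ => φ (c j) xb :=
      eventually_of_mem (hopen.mem_nhds ht) fun s hs => (hIoo s hs).1 j
    have h2 : HasDerivAt (fun s => φ (c j) (ζ s)) 0 t :=
      (hasDerivAt_const t (φ (c j) xb)).congr_of_eventuallyEq hconst
    exact h1.unique h2
  have hzero_i : ∀ t ∈ Ioo (-δ:ℝ) δ, ∀ i, fderiv ℝ (φ i) (ζ t) (deriv ζ t) = 0 := by
    intro t ht i
    rw [← aux_inner_gradient]
    refine aux_inner_zero_of_mem_span ?_ ((hIoo t ht).2.1 i)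
    rintro u' ⟨j, rfl⟩
    rw [aux_inner_gradient]
    exact hzero_j t ht j
  have hconst_all : ∀ t ∈ Ioo (-δ:ℝ) δ, ∀ i, φ i (ζ t) = φ i xb := by
    intro t ht i
    have h1 : ∀ s ∈ Ioo (-δ:ℝ) δ, HasDerivAt (fun s => φ i (ζ s)) 0 s := by
      intro s hs
      have := ((hφ i).differentiable h12 (ζ s)).hasFDerivAt.comp_hasDerivAt s (hdiff s hs)
      rwa [hzero_i s hs i] at this
    have := aux_const_of_deriv_zero h1 t ht
    rw [this, hζ0]
  have h0mem : (0:ℝ) ∈ Ioo (-δ:ℝ) δ := ⟨by linarith, hδ⟩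
  set y : ℝ → b → ℝ := fun t => (q t).2 with hydef
  have hy : DifferentiableAt ℝ y 0 :=
    (contDiff_snd.contDiffAt.comp 0 hqcd).differentiableAt h12
  have hyd : HasDerivAt y (deriv y 0) 0 := hy.hasDerivAt
  have hζalt : ζ = fun t => xb + (t • d + ∑ j : b, y t j • (j : E)) := by
    funext t
    simp only [hζdef, hθ, hydef]
    rw [hLapp]
  have hder0 : HasDerivAt ζ (d + ∑ j : b, deriv y 0 j • (j : E)) 0 := by
    rw [hζalt]
    have h1 : HasDerivAt (fun t : ℝ => t • d) ((1:ℝ) • d) 0 := (hasDerivAt_id 0).smul_const d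
    have h2 : ∀ j : b, HasDerivAt (fun t => y t j • (j : E)) (deriv y 0 j • (j : E)) 0 := by
      intro j
      have hj : HasDerivAt (fun t => y t j) (deriv y 0 j) 0 := by
        have := (ContinuousLinearMap.proj (R := ℝ) (φ := fun _ : b => ℝ)
          j).hasFDerivAt.comp_hasDerivAt 0 hyd
        exact this
      exact hj.smul_const (j : E)
    have h3 := (h1.add (HasDerivAt.sum (u := Finset.univ) fun j _ => h2 j)).const_add xb
    simpa using h3
  have hderiv0 : deriv ζ 0 = d + ∑ j : b, deriv y 0 j • (j : E) := hder0.deriv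
  set z : E := ∑ j : b, deriv y 0 j • (j : E) with hzdef
  have hzj : ∀ j : b, ⟪(j:E), z⟫ = 0 := by
    intro j
    have h1 : fderiv ℝ (φ (c j)) xb (deriv ζ 0) = 0 := by
      have := hzero_j 0 h0mem j; rwa [hζ0] at this
    have h3 : ⟪(j:E), deriv ζ 0⟫ = 0 := by
      rw [← hc j, hw, aux_inner_gradient]
      exact h1
    have h4 : ⟪(j:E), d⟫ = 0 := by
      rw [← hc j, hw, aux_inner_gradient]
      exact hd (c j)
    rw [hderiv0, inner_add_right, h4, zero_add] at h3
    exact h3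
  have hz0 : z = 0 := by
    rw [← inner_self_eq_zero (𝕜 := ℝ) (x := z)]
    refine aux_inner_zero_of_mem_span (S := Set.range fun j : b => (j : E)) ?_ ?_
    · rintro u' ⟨j, rfl⟩; exact hzj j
    · rw [hzdef]
      exact Submodule.sum_mem _ fun j _ =>
        Submodule.smul_mem _ _ (Submodule.subset_span ⟨j, rfl⟩)
  have hderd : deriv ζ 0 = d := by rw [hderiv0, hz0, add_zero]
  exact ⟨δ, hδ, ζ, hζ0, hζI, hderd ▸ hdiff 0 h0mem, hderd,
    fun t ht i => hconst_all t ht i⟩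


end AuxLemmas

theorem wsonc_under_wcr {n m p l : ℕ} (f : Vec n → ℝ) (g : Fin m → Vec n → ℝ)
    (h : Fin p → Vec n → ℝ) (G H : Fin l → Vec n → ℝ)
    (hf : ContDiff ℝ 2 f) (hg : ∀ i, ContDiff ℝ 2 (g i)) (hh : ∀ j, ContDiff ℝ 2 (h j))
    (hG : ∀ k, ContDiff ℝ 2 (G k)) (hH : ∀ k, ContDiff ℝ 2 (H k))
    (xb : Vec n) (hxb : xb ∈ Feas g h G H)
    (hopt : LocallyOptimal f g h G H xb) (hS : SStationary f g h G H xb)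
    (hcq : WCR g h G H xb) :
    ∀ (lam : Fin m → ℝ) (ρ : Fin p → ℝ) (μ ν : Fin l → ℝ),
      SStationarySystem f g h G H xb lam ρ μ ν →
      ∀ d ∈ CritSubspace g h G H xb,
        0 ≤ hessForm (lagr f g h G H lam ρ μ ν) xb d := by
  classical
  intro lam ρ μ ν hsys d hd
  obtain ⟨hsys1, hsys2, hsys3, hsys4, hsys5⟩ := hsys
  obtain ⟨hfeasg, hfeash, hfeasGH⟩ := hxb
  obtain ⟨-, εopt, hεopt, hoptmin⟩ := hopt
  obtain ⟨hd1, hd2, hd3, hd4⟩ := hd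
  have h12 : (2:WithTop ℕ∞) ≠ 0 := by norm_num
  set φc : (↥(Ig g xb) ⊕ (Fin p ⊕ (↥(IG G H xb ∪ IGH G H xb) ⊕ ↥(IH G H xb ∪ IGH G H xb))))
      → Vec n → ℝ :=
    Sum.elim (fun i => g i.1) (Sum.elim (fun j => h j)
      (Sum.elim (fun k => G k.1) (fun k => H k.1))) with hφcdef
  have hφc : ∀ i, ContDiff ℝ 2 (φc i) := by
    rintro (i | j | k | k)
    · exact hg i.1
    · exact hh j
    · exact hG k.1
    · exact hH k.1
  have hrange : ∀ x : Vec n, (range fun i => gradient (φc i) x) =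
      ((fun i => gradient (g i) x) '' Ig g xb ∪ range (fun j => gradient (h j) x) ∪
        (fun k => gradient (G k) x) '' (IG G H xb ∪ IGH G H xb) ∪
        (fun k => gradient (H k) x) '' (IH G H xb ∪ IGH G H xb)) := by
    intro x
    have h1 : (fun i => gradient (φc i) x) =
        Sum.elim (fun i : ↥(Ig g xb) => gradient (g i.1) x)
          (Sum.elim (fun j : Fin p => gradient (h j) x)
            (Sum.elim (fun k : ↥(IG G H xb ∪ IGH G H xb) => gradient (G k.1) x)
              (fun k : ↥(IH G H xb ∪ IGH G H xb) => gradient (H k.1) x))) := by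
      funext i
      rcases i with i | j | k | k <;> rfl
    rw [h1, Sum.elim_range, Sum.elim_range, Sum.elim_range,
      ← Set.image_eq_range (fun i => gradient (g i) x) (Ig g xb),
      ← Set.image_eq_range (fun k => gradient (G k) x) (IG G H xb ∪ IGH G H xb),
      ← Set.image_eq_range (fun k => gradient (H k) x) (IH G H xb ∪ IGH G H xb),
      Set.union_assoc, Set.union_assoc]
  obtain ⟨ε, hε, hwcr⟩ := hcq
  have hrank : ∀ᶠ x in 𝓝 xb,
      Module.finrank ℝ ↥(Submodule.span ℝ (range fun i => gradient (φc i) x)) =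
      Module.finrank ℝ ↥(Submodule.span ℝ (range fun i => gradient (φc i) xb)) := by
    have hball : ∀ᶠ x in 𝓝 xb, ‖x - xb‖ < ε := by
      filter_upwards [Metric.ball_mem_nhds xb hε] with x hx
      rwa [mem_ball, dist_eq_norm] at hx
    filter_upwards [hball] with x hx
    have hx2 := hwcr x hx
    simp only [gradRank] at hx2
    rw [hrange x, hrange xb]
    exact hx2
  have hdφ : ∀ i, fderiv ℝ (φc i) xb d = 0 := by
    rintro (i | j | k | k)
    · exact hd1 i.1 i.2
    · exact hd2 j
    · exact hd3 k.1 k.2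
    · exact hd4 k.1 k.2
  obtain ⟨δ, hδ, ζ, hζ0, hζcd, hζd0, hζderiv0, hζconst⟩ :=
    aux_exists_arc φc hφc xb hrank d hdφ
  have h0mem : (0:ℝ) ∈ Ioo (-δ:ℝ) δ := ⟨by linarith, hδ⟩
  have hgA : ∀ t ∈ Ioo (-δ:ℝ) δ, ∀ i ∈ Ig g xb, g i (ζ t) = g i xb := by
    intro t ht i hi
    exact hζconst t ht (Sum.inl ⟨i, hi⟩)
  have hhA : ∀ t ∈ Ioo (-δ:ℝ) δ, ∀ j, h j (ζ t) = h j xb := by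
    intro t ht j
    exact hζconst t ht (Sum.inr (Sum.inl j))
  have hGA : ∀ t ∈ Ioo (-δ:ℝ) δ, ∀ k ∈ IG G H xb ∪ IGH G H xb, G k (ζ t) = G k xb := by
    intro t ht k hk
    exact hζconst t ht (Sum.inr (Sum.inr (Sum.inl ⟨k, hk⟩)))
  have hHA : ∀ t ∈ Ioo (-δ:ℝ) δ, ∀ k ∈ IH G H xb ∪ IGH G H xb, H k (ζ t) = H k xb := by
    intro t ht k hk
    exact hζconst t ht (Sum.inr (Sum.inr (Sum.inr ⟨k, hk⟩)))
  have hGmem : ∀ k, G k xb = 0 → k ∈ IG G H xb ∪ IGH G H xb := by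
    intro k hk
    by_cases hH' : H k xb = 0
    · exact Set.mem_union_right _ ⟨hk, hH'⟩
    · exact Set.mem_union_left _ ⟨hk, hH'⟩
  have hGzero : ∀ k, G k xb ≠ 0 → H k xb = 0 := by
    intro k hk
    rcases mul_eq_zero.1 (hfeasGH k) with h' | h'
    · exact absurd h' hk
    · exact h'
  have hlagr : ∀ t ∈ Ioo (-δ:ℝ) δ, lagr f g h G H lam ρ μ ν (ζ t) = f (ζ t) := by
    intro t ht
    have e1 : ∑ i, lam i * g i (ζ t) = 0 := Finset.sum_eq_zero (by
      intro i _
      by_cases hi : g i xb = 0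
      · rw [hgA t ht i hi, hi, mul_zero]
      · have hli : lam i = 0 := by
          rcases mul_eq_zero.1 (hsys2 i) with h' | h'
          · exact h'
          · exact absurd h' hi
        rw [hli, zero_mul])
    have e2 : ∑ j, ρ j * h j (ζ t) = 0 := Finset.sum_eq_zero (by
      intro j _; rw [hhA t ht j, hfeash j, mul_zero])
    have e3 : ∑ k, μ k * G k (ζ t) = 0 := Finset.sum_eq_zero (by
      intro k _
      by_cases hk : G k xb = 0
      · rw [hGA t ht k (hGmem k hk), hk, mul_zero]
      · rw [hsys3 k (Set.mem_union_left _ ⟨hk, hGzero k hk⟩), zero_mul])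
    have e4 : ∑ k, ν k * H k (ζ t) = 0 := Finset.sum_eq_zero (by
      intro k _
      by_cases hk : H k xb = 0
      · by_cases hG' : G k xb = 0
        · rw [hsys4 k (Set.mem_union_right _ ⟨hG', hk⟩), zero_mul]
        · rw [hHA t ht k (Set.mem_union_left _ ⟨hG', hk⟩), hk, mul_zero]
      · have hG' : G k xb = 0 := by
          rcases mul_eq_zero.1 (hfeasGH k) with h' | h'
          · exact h'
          · exact absurd h' hk
        rw [hsys4 k (Set.mem_union_left _ ⟨hG', hk⟩), zero_mul])
    simp only [lagr]
    rw [e1, e2, e3, e4]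
    ring
  have hlagr0 : lagr f g h G H lam ρ μ ν xb = f xb := by
    have := hlagr 0 h0mem
    rwa [hζ0] at this
  have hIooev : ∀ᶠ t in 𝓝 (0:ℝ), t ∈ Ioo (-δ:ℝ) δ := Ioo_mem_nhds (by linarith) hδ
  have hζtend : Tendsto ζ (𝓝 0) (𝓝 xb) := by
    have := hζcd.continuousOn.continuousAt (Ioo_mem_nhds (by linarith) hδ)
    rwa [ContinuousAt, hζ0] at this
  have hfev : ∀ᶠ t in 𝓝 (0:ℝ), f xb ≤ f (ζ t) := by
    have hg_ev : ∀ᶠ t in 𝓝 (0:ℝ), ∀ i, g i (ζ t) ≤ 0 := by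
      rw [eventually_all]
      intro i
      by_cases hi : g i xb = 0
      · filter_upwards [hIooev] with t ht
        rw [hgA t ht i hi, hi]
      · have hlt : g i xb < 0 := lt_of_le_of_ne (hfeasg i) hi
        have htd : Tendsto (fun t => g i (ζ t)) (𝓝 0) (𝓝 (g i xb)) :=
          ((hg i).continuous.tendsto xb).comp hζtend
        filter_upwards [htd.eventually_lt_const hlt] with t ht
        exact ht.le
    have hGH_ev : ∀ᶠ t in 𝓝 (0:ℝ), ∀ k, G k (ζ t) * H k (ζ t) = 0 := by
      rw [eventually_all]
      intro k
      filter_upwards [hIooev] with t ht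
      by_cases hk : G k xb = 0
      · rw [hGA t ht k (hGmem k hk), hk, zero_mul]
      · have hH' : H k xb = 0 := hGzero k hk
        rw [hHA t ht k (Set.mem_union_left _ ⟨hk, hH'⟩), hH', mul_zero]
    have hball : ∀ᶠ t in 𝓝 (0:ℝ), ‖ζ t - xb‖ < εopt := by
      filter_upwards [hζtend.eventually_mem (Metric.ball_mem_nhds xb hεopt)] with t ht
      rwa [mem_ball, dist_eq_norm] at ht
    filter_upwards [hg_ev, hGH_ev, hball, hIooev] with t h1 h2 h3 ht
    exact hoptmin (ζ t) ⟨h1, fun j => by rw [hhA t ht j]; exact hfeash j, h2⟩ h3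
  set ℓ := lagr f g h G H lam ρ μ ν with hℓ
  have hℓcd : ContDiff ℝ 2 ℓ := by
    exact (((hf.add (ContDiff.sum fun i _ => contDiff_const.mul (hg i))).add
      (ContDiff.sum fun j _ => contDiff_const.mul (hh j))).add
      (ContDiff.sum fun k _ => contDiff_const.mul (hG k))).add
      (ContDiff.sum fun k _ => contDiff_const.mul (hH k))
  have hDzero : fderiv ℝ ℓ xb = 0 := by
    have hD : HasFDerivAt ℓ
        (fderiv ℝ f xb + (∑ i, lam i • fderiv ℝ (g i) xb) +
          (∑ j, ρ j • fderiv ℝ (h j) xb) + (∑ k, μ k • fderiv ℝ (G k) xb) +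
          ∑ k, ν k • fderiv ℝ (H k) xb) xb := by
      refine (((((hf.differentiable h12 xb).hasFDerivAt.add
        (HasFDerivAt.sum fun i _ =>
          ((hg i).differentiable h12 xb).hasFDerivAt.const_mul (lam i))).add
        (HasFDerivAt.sum fun j _ =>
          ((hh j).differentiable h12 xb).hasFDerivAt.const_mul (ρ j))).add
        (HasFDerivAt.sum fun k _ =>
          ((hG k).differentiable h12 xb).hasFDerivAt.const_mul (μ k))).add
        (HasFDerivAt.sum fun k _ =>
          ((hH k).differentiable h12 xb).hasFDerivAt.const_mul (ν k))).congr_of_eventuallyEq (Filter.Eventually.of_forall fun x => ?_)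
      simp [hℓ, lagr, Finset.sum_apply]
    rw [hD.fderiv]
    apply ContinuousLinearMap.ext
    intro v
    have hIn := congrArg (fun z => (inner ℝ z v : ℝ)) hsys5
    simp only [inner_add_left, sum_inner, real_inner_smul_left, inner_zero_left,
      aux_inner_gradient] at hIn
    simp only [ContinuousLinearMap.add_apply, ContinuousLinearMap.coe_sum',
      Finset.sum_apply, ContinuousLinearMap.coe_smul', Pi.smul_apply, smul_eq_mul,
      ContinuousLinearMap.zero_apply]
    exact hIn
  have hζdiff : ∀ t ∈ Ioo (-δ:ℝ) δ, HasDerivAt ζ (deriv ζ t) t := fun t ht =>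
    ((hζcd.differentiableOn h12 t ht).differentiableAt (isOpen_Ioo.mem_nhds ht)).hasDerivAt
  have hψder : ∀ t ∈ Ioo (-δ:ℝ) δ,
      HasDerivAt (fun s => ℓ (ζ s)) (fderiv ℝ ℓ (ζ t) (deriv ζ t)) t := fun t ht =>
    (hℓcd.differentiable h12 (ζ t)).hasFDerivAt.comp_hasDerivAt t (hζdiff t ht)
  have hℓ1 : ContDiff ℝ 1 (fderiv ℝ ℓ) := hℓcd.fderiv_right (by norm_num)
  have hA2 : HasDerivAt (fun t => fderiv ℝ ℓ (ζ t)) (fderiv ℝ (fderiv ℝ ℓ) xb d) 0 := by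
    have h2 : HasFDerivAt (fderiv ℝ ℓ) (fderiv ℝ (fderiv ℝ ℓ) xb) xb :=
      (hℓ1.differentiable one_ne_zero xb).hasFDerivAt
    rw [← hζ0] at h2
    have h3 := h2.comp_hasDerivAt 0 hζd0
    rwa [hζ0] at h3
  have hB : HasDerivAt (fun t => deriv ζ t) (deriv (deriv ζ) 0) 0 := by
    have h1 : ContDiffOn ℝ 1 (deriv ζ) (Ioo (-δ:ℝ) δ) :=
      hζcd.deriv_of_isOpen isOpen_Ioo (by norm_num)
    exact ((h1.differentiableOn one_ne_zero 0 h0mem).differentiableAt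
      (isOpen_Ioo.mem_nhds h0mem)).hasDerivAt
  have hDψ : HasDerivAt (fun t => fderiv ℝ ℓ (ζ t) (deriv ζ t))
      (fderiv ℝ (fderiv ℝ ℓ) xb d d) 0 := by
    have h4 := hA2.clm_apply hB
    rw [hζderiv0, hζ0, hDzero] at h4
    simpa using h4
  obtain ⟨δ2, hδ2, hI2⟩ := aux_nhds_Ioo (hfev.and hIooev)
  have hmin : ∀ t ∈ Ioo (-δ2:ℝ) δ2, ℓ (ζ 0) ≤ ℓ (ζ t) := by
    intro t ht
    obtain ⟨h1, h2⟩ := hI2 t ht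
    calc ℓ (ζ 0) = f xb := by rw [hζ0, hℓ]; exact hlagr0
    _ ≤ f (ζ t) := h1
    _ = ℓ (ζ t) := by rw [hℓ]; exact (hlagr t h2).symm
  have hkey : 0 ≤ fderiv ℝ (fderiv ℝ ℓ) xb d d := by
    refine aux_second_order (ψ := fun t => ℓ (ζ t))
      (Dψ := fun t => fderiv ℝ ℓ (ζ t) (deriv ζ t)) hδ2 hmin
      (fun t ht => hψder t (hI2 t ht).2) ?_ hDψ
    simp [hζ0, hDzero]
  have hform : hessForm ℓ xb d = fderiv ℝ (fderiv ℝ ℓ) xb d d := by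
    rw [hessForm, iteratedFDeriv_two_apply]
    simp
  rw [hform]
  exact hkey

end MPSC
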